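/- Let k be an algebraically closed field and let (A, ε) be a symmetric algebra over k. Let e_1, …, e_n ∈ A be a complete set of orthogonal primitive idempotents (each e_i is a primitive idempotent, e_i·e_j = 0 for i ≠ j, and e_1 + ⋯ + e_n = 1). Then the rank of the n×n matrix over k whose (i,j)-entry is the image in k of the natural number dim_k(e_i A e_j) equals dim_k Hig(A). -/

import Mathlib

open scoped Classical

universe u

/-- An idempotent is primitive if it is nonzero and cannot be written as the sum of two
nonzero orthogonal idempotents. -/
def IsPrimitiveIdempotent {A : Type u} [Ring A] (e : A) : Prop :=
  e ≠ 0 ∧ IsIdempotentElem e ∧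
    ¬ ∃ e' e'' : A, e' ≠ 0 ∧ e'' ≠ 0 ∧ IsIdempotentElem e' ∧ IsIdempotentElem e'' ∧
        e' * e'' = 0 ∧ e'' * e' = 0 ∧ e = e' + e''

section Helpers

set_option linter.unusedSectionVars false

variable {k : Type u} {A : Type u} [Field k] [Ring A] [Algebra k A] [FiniteDimensional k A]

lemma comp_pow_eq (a b : A) (m : ℕ) :
    ((LinearMap.mulLeft k a).comp (LinearMap.mulRight k b)) ^ m
      = (LinearMap.mulLeft k (a ^ m)).comp (LinearMap.mulRight k (b ^ m)) := by
  have h := (LinearMap.commute_mulLeft_right (R := k) a b).mul_pow m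
  simpa [Module.End.mul_eq_comp, LinearMap.pow_mulLeft, LinearMap.pow_mulRight] using h

lemma trace_comp_eq_zero_of_nilpotent (a b : A) (h : IsNilpotent a ∨ IsNilpotent b) :
    LinearMap.trace k A ((LinearMap.mulLeft k a).comp (LinearMap.mulRight k b)) = 0 := by
  have hn : IsNilpotent ((LinearMap.mulLeft k a).comp (LinearMap.mulRight k b)) := by
    rcases h with ⟨m, hm⟩ | ⟨m, hm⟩
    · exact ⟨m, by rw [comp_pow_eq, hm, LinearMap.mulLeft_zero_eq_zero, LinearMap.zero_comp]⟩
    · exact ⟨m, by rw [comp_pow_eq, hm, LinearMap.mulRight_zero_eq_zero, LinearMap.comp_zero]⟩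
  exact (LinearMap.isNilpotent_trace_of_isNilpotent hn).eq_zero

lemma trace_formula {ι : Type u} [Fintype ι] (u v : Module.Basis ι k A) (ε : A →ₗ[k] k)
    (hdual : ∀ l m, ε (u l * v m) = if l = m then 1 else 0) (a b : A) :
    LinearMap.trace k A ((LinearMap.mulLeft k a).comp (LinearMap.mulRight k b))
      = ε (a * (∑ l, (LinearMap.mulLeft k (u l)).comp (LinearMap.mulRight k (v l))) b) := by
  have hrepr : ∀ (x : A) (l : ι), u.repr x l = ε (x * v l) := by
    intro x l
    have h : (u.coord l) = ε ∘ₗ LinearMap.mulRight k (v l) := by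
      apply u.ext
      intro m
      simp only [Module.Basis.coord_apply, Module.Basis.repr_self, LinearMap.coe_comp, Function.comp_apply,
        LinearMap.mulRight_apply, Finsupp.single_apply, hdual m l]
    have := LinearMap.congr_fun h x
    simpa using this
  rw [LinearMap.trace_eq_matrix_trace k u, Matrix.trace]
  simp only [Matrix.diag_apply, LinearMap.toMatrix_apply, LinearMap.coe_comp,
    Function.comp_apply, LinearMap.mulLeft_apply, LinearMap.mulRight_apply]
  simp only [hrepr]
  rw [show ((∑ l, (LinearMap.mulLeft k (u l)).comp (LinearMap.mulRight k (v l))) b)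
      = ∑ l, u l * (b * v l) by simp [LinearMap.sum_apply], Finset.mul_sum, map_sum]
  congr 1
  ext l
  congr 1
  simp [mul_assoc]

lemma trace_proj (E F : A) (hE : IsIdempotentElem E) (hF : IsIdempotentElem F) :
    LinearMap.trace k A ((LinearMap.mulLeft k E).comp (LinearMap.mulRight k F))
      = (Module.finrank k (LinearMap.range
          ((LinearMap.mulLeft k E).comp (LinearMap.mulRight k F))) : k) := by
  set P := (LinearMap.mulLeft k E).comp (LinearMap.mulRight k F) with hP
  have happ : ∀ x : A, P x = E * (x * F) := fun x => rfl
  have hproj : LinearMap.IsProj (LinearMap.range P) P := by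
    refine ⟨fun x => LinearMap.mem_range_self P x, ?_⟩
    rintro x ⟨y, rfl⟩
    rw [happ, happ]
    rw [mul_assoc E (y * F) F, mul_assoc y F F, hF.eq, ← mul_assoc E E (y * F), hE.eq]
  exact hproj.trace

variable [IsAlgClosed k]

lemma exists_smul_nilpotent {E : A} (hP : IsPrimitiveIdempotent E) (x : A) :
    ∃ lam : k, IsNilpotent (E * x * E - lam • E) := by
  obtain ⟨hne, hidem, hprim⟩ := hP
  set y : A := E * x * E with hy
  have hEy : E * y = y := by rw [hy, ← mul_assoc, ← mul_assoc, hidem.eq]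
  have hyE : y * E = y := by rw [hy, mul_assoc (E * x) E E, hidem.eq]
  have hcEy : Commute E y := hEy.trans hyE.symm
  set f : Module.End k A := Algebra.lmul k A y with hf
  have hfpow : ∀ (μ : k) (m : ℕ) (z : A),
      ((f - μ • 1) ^ m) z = (y - μ • (1 : A)) ^ m * z := by
    intro μ m z
    have h1 : f - μ • (1 : Module.End k A) = Algebra.lmul k A (y - μ • (1 : A)) := by
      rw [map_sub, map_smul, map_one, hf]
    rw [h1, ← map_pow]
    rfl
  set N : k → Submodule k A := fun μ => f.maxGenEigenspace μ with hN
  have hmemN : ∀ (μ : k) (z : A), z ∈ N μ ↔ ∃ m : ℕ, (y - μ • (1 : A)) ^ m * z = 0 := by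
    intro μ z
    rw [hN]
    simp only [Module.End.mem_maxGenEigenspace, hfpow]
  have hcomm : ∀ (μ : k) (m : ℕ), Commute E ((y - μ • (1 : A)) ^ m) := fun μ m =>
    ((hcEy.sub_right ((Commute.one_right E).smul_right μ)).pow_right m)
  have hNr : ∀ (μ : k) (z a : A), z ∈ N μ → z * a ∈ N μ := by
    intro μ z a hz
    rcases (hmemN μ z).mp hz with ⟨m, hm⟩
    exact (hmemN μ (z * a)).mpr ⟨m, by rw [← mul_assoc, hm, zero_mul]⟩
  have hNl : ∀ (μ : k) (z : A), z ∈ N μ → E * z ∈ N μ := by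
    intro μ z hz
    rcases (hmemN μ z).mp hz with ⟨m, hm⟩
    refine (hmemN μ (E * z)).mpr ⟨m, ?_⟩
    rw [← mul_assoc, ← (hcomm μ m).eq, mul_assoc, hm, mul_zero]
  have hSr : ∀ (s : Finset k) (a z : A), z ∈ (⨆ μ ∈ s, N μ) → z * a ∈ (⨆ μ ∈ s, N μ) := by
    intro s a z hz
    have hle : Submodule.map (LinearMap.mulRight k a) (⨆ μ ∈ s, N μ) ≤ ⨆ μ ∈ s, N μ := by
      simp_rw [Submodule.map_iSup]
      refine iSup₂_mono fun μ _ => ?_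
      rintro w ⟨z', hz', rfl⟩
      exact hNr μ z' a hz'
    exact hle (Submodule.mem_map_of_mem hz)
  have hSl : ∀ (s : Finset k) (z : A), z ∈ (⨆ μ ∈ s, N μ) → E * z ∈ (⨆ μ ∈ s, N μ) := by
    intro s z hz
    have hle : Submodule.map (LinearMap.mulLeft k E) (⨆ μ ∈ s, N μ) ≤ ⨆ μ ∈ s, N μ := by
      simp_rw [Submodule.map_iSup]
      refine iSup₂_mono fun μ _ => ?_
      rintro w ⟨z', hz', rfl⟩
      exact hNl μ z' hz'
    exact hle (Submodule.mem_map_of_mem hz)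
  have main : ∀ s : Finset k, E ∈ (⨆ μ ∈ s, N μ) → ∃ μ : k, E ∈ N μ := by
    intro s
    induction s using Finset.induction_on with
    | empty =>
      intro h
      simp only [Finset.notMem_empty, iSup_false, iSup_bot, Submodule.mem_bot] at h
      exact absurd h hne
    | @insert μ₀ t hμ₀t ih =>
      intro hmem
      rw [Finset.iSup_insert] at hmem
      obtain ⟨g, hg, g', hg', hEgg⟩ := Submodule.mem_sup.mp hmem
      have hE2 : E = g + g' := hEgg.symm
      have hdisj : Disjoint (N μ₀) (⨆ μ ∈ t, N μ) := by
        have h1 : Disjoint (N μ₀) (⨆ μ ∈ (↑t : Set k), N μ) :=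
          f.independent_maxGenEigenspace.disjoint_biSup (by simpa using hμ₀t)
        simpa using h1
      have hbot : N μ₀ ⊓ (⨆ μ ∈ t, N μ) = ⊥ := disjoint_iff.mp hdisj
      have hsum' : g * E + g' * E = g + g' := by
        rw [← add_mul, ← hE2, hidem.eq]
      have hgE : g * E = g ∧ g' * E = g' := by
        have h1 : g * E ∈ N μ₀ := hNr μ₀ g E hg
        have h2 : g' * E ∈ ⨆ μ ∈ t, N μ := hSr t E g' hg'
        have h3 : g * E - g ∈ N μ₀ ⊓ (⨆ μ ∈ t, N μ) := by
          refine Submodule.mem_inf.mpr ⟨sub_mem h1 hg, ?_⟩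
          have heq : g * E - g = g' - g' * E := by
            rw [sub_eq_sub_iff_add_eq_add, add_comm g' g, ← hsum']
          rw [heq]
          exact sub_mem hg' h2
        rw [hbot, Submodule.mem_bot, sub_eq_zero] at h3
        refine ⟨h3, ?_⟩
        have h4 := hsum'
        rw [h3] at h4
        exact add_left_cancel h4
      have key1 : g' * g = 0 := by
        have hmem1 : g' * g = E * g - g * g := by
          rw [hE2, add_mul]
          abel
        have h1 : g' * g ∈ N μ₀ := by
          rw [hmem1]
          exact sub_mem (hNl μ₀ g hg) (hNr μ₀ g g hg)
        have h2 : g' * g ∈ ⨆ μ ∈ t, N μ := hSr t g g' hg'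
        have h5 := hbot ▸ (Submodule.mem_inf.mpr ⟨h1, h2⟩)
        simpa using h5
      have key2 : g * g' = 0 := by
        have hmem1 : g * g' = E * g' - g' * g' := by
          rw [hE2, add_mul]
          abel
        have h2 : g * g' ∈ ⨆ μ ∈ t, N μ := by
          rw [hmem1]
          exact sub_mem (hSl t g' hg') (hSr t g' g' hg')
        have h1 : g * g' ∈ N μ₀ := hNr μ₀ g g' hg
        have h5 := hbot ▸ (Submodule.mem_inf.mpr ⟨h1, h2⟩)
        simpa using h5
      have hg2 : IsIdempotentElem g := by
        have h6 := hgE.1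
        rw [hE2, mul_add, key2, add_zero] at h6
        exact h6
      have hg'2 : IsIdempotentElem g' := by
        have h6 := hgE.2
        rw [hE2, mul_add, key1, zero_add] at h6
        exact h6
      by_cases hgz : g = 0
      · refine ih ?_
        rw [hgz, zero_add] at hE2
        exact hE2 ▸ hg'
      by_cases hg'z : g' = 0
      · rw [hg'z, add_zero] at hE2
        exact ⟨μ₀, hE2 ▸ hg⟩
      · exact absurd ⟨g, g', hgz, hg'z, hg2, hg'2, key2, key1, hE2⟩ hprim
  have htop : E ∈ ⨆ μ : k, N μ := by
    rw [hN]
    rw [Module.End.iSup_maxGenEigenspace_eq_top f]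
    trivial
  obtain ⟨s, hs⟩ := Submodule.mem_iSup_iff_exists_finset.mp htop
  obtain ⟨μ, hμ⟩ := main s hs
  obtain ⟨m, hm⟩ := (hmemN μ E).mp hμ
  refine ⟨μ, ?_⟩
  have heq : y - μ • E = (y - μ • (1 : A)) * E := by
    rw [sub_mul, hyE, smul_mul_assoc, one_mul]
  rw [heq]
  refine ⟨m + 1, ?_⟩
  have hc : Commute (y - μ • (1 : A)) E :=
    (hcEy.sub_right ((Commute.one_right E).smul_right μ)).symm
  rw [hc.mul_pow, hidem.pow_succ_eq, pow_succ', mul_assoc, hm, mul_zero]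

end Helpers

theorem rank_cartan_eq_finrank_higman
    (k : Type u) (A : Type u) [Field k] [IsAlgClosed k] [Ring A] [Algebra k A]
    [FiniteDimensional k A]
    (ε : A →ₗ[k] k)
    (hcentral : ∀ a b : A, ε (a * b) = ε (b * a))
    (hnondeg : ∀ a : A, (∀ b : A, ε (a * b) = 0) → a = 0)
    (n : ℕ) (e : Fin n → A)
    (hprim : ∀ i, IsPrimitiveIdempotent (e i))
    (horth : ∀ i j, i ≠ j → e i * e j = 0)
    (hsum : ∑ i, e i = 1)
    (ι : Type u) [Fintype ι] (u v : Module.Basis ι k A)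
    (hdual : ∀ l m, ε (u l * v m) = if l = m then 1 else 0) :
    (Matrix.of fun i j : Fin n =>
        ((Module.finrank k
            (LinearMap.range
              ((LinearMap.mulLeft k (e i)).comp (LinearMap.mulRight k (e j)))) : ℕ) : k)).rank
      = Module.finrank k
          (LinearMap.range
            (∑ l, (LinearMap.mulLeft k (u l)).comp (LinearMap.mulRight k (v l)))) := by
  classical
  set H : A →ₗ[k] A := ∑ l, (LinearMap.mulLeft k (u l)).comp (LinearMap.mulRight k (v l))
    with hH
  have key : ∀ a b : A,
      LinearMap.trace k A ((LinearMap.mulLeft k a).comp (LinearMap.mulRight k b))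
        = ε (a * H b) := fun a b => trace_formula u v ε hdual a b
  have hidem : ∀ i, IsIdempotentElem (e i) := fun i => (hprim i).2.1
  have hnil0 : ∀ a b : A, (IsNilpotent a ∨ IsNilpotent b) → ε (a * H b) = 0 := fun a b h =>
    (key a b) ▸ trace_comp_eq_zero_of_nilpotent a b h
  have hnondeg' : ∀ z : A, (∀ a : A, ε (a * z) = 0) → z = 0 := by
    intro z hz
    exact hnondeg z fun b => (hcentral z b).trans (hz b)
  have Hnil : ∀ c : A, IsNilpotent c → H c = 0 := by
    intro c hc
    exact hnondeg' (H c) fun a => hnil0 a c (Or.inr hc)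
  choose lam hlam using fun (i : Fin n) (b : A) => exists_smul_nilpotent (k := k) (hprim i) b
  have peirce : ∀ b : A, b = ∑ i, ∑ j, e i * b * e j := by
    intro b
    have h1 : b = (∑ i, e i) * b * (∑ j, e j) := by rw [hsum, one_mul, mul_one]
    conv_lhs => rw [h1]
    rw [Finset.sum_mul, Finset.sum_mul]
    refine Finset.sum_congr rfl fun i _ => ?_
    rw [Finset.mul_sum]
  have offdiag_nil : ∀ (i j : Fin n) (b : A), i ≠ j → IsNilpotent (e i * b * e j) := by
    intro i j b hij
    refine ⟨2, ?_⟩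
    rw [sq, mul_assoc (e i * b) (e j) _, ← mul_assoc (e j) (e i * b) (e j),
      ← mul_assoc (e j) (e i) b, horth j i (Ne.symm hij), zero_mul, zero_mul, mul_zero]
  have Hdecomp : ∀ b : A, H b = ∑ i, lam i b • H (e i) := by
    intro b
    conv_lhs => rw [peirce b]
    rw [map_sum]
    refine Finset.sum_congr rfl fun i _ => ?_
    rw [map_sum]
    have hterm : ∀ j : Fin n, H (e i * b * e j)
        = if j = i then lam i b • H (e i) else 0 := by
      intro j
      by_cases hj : j = i
      · subst hj
        have hsplit : e j * b * e j = lam j b • e j + (e j * b * e j - lam j b • e j) := by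
          abel
        rw [if_pos rfl, hsplit, map_add, map_smul, Hnil _ (hlam j b), add_zero]
      · rw [if_neg hj, Hnil _ (offdiag_nil i j b (fun h => hj h.symm))]
    rw [Finset.sum_congr rfl fun j _ => hterm j]
    simp
  set Φ : A →ₗ[k] Module.Dual k A := ((LinearMap.mul k A).compr₂ ε).flip with hΦdef
  have hΦ : ∀ z a : A, Φ z a = ε (a * z) := fun z a => rfl
  have hΦinj : Function.Injective Φ := by
    rw [← LinearMap.ker_eq_bot]
    refine LinearMap.ker_eq_bot'.mpr fun z hz => ?_
    exact hnondeg' z fun a => by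
      have := LinearMap.congr_fun hz a
      simpa [hΦ] using this
  set T : A →ₗ[k] Module.Dual k A := Φ ∘ₗ H with hTdef
  have hT : ∀ b a : A, T b a = ε (a * H b) := fun b a => rfl
  set α : (Fin n → k) →ₗ[k] A := ∑ j, LinearMap.smulRight (LinearMap.proj j) (e j) with hαdef
  have hα : ∀ c : Fin n → k, α c = ∑ j, c j • e j := by
    intro c
    simp [hαdef, LinearMap.sum_apply]
  set evE : Module.Dual k A →ₗ[k] (Fin n → k) :=
    LinearMap.pi (fun i => Module.Dual.eval k A (e i)) with hevEdef
  have hevE : ∀ (f : Module.Dual k A) (i : Fin n), evE f i = f (e i) := fun f i => rfl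
  have hM : ∀ i j : Fin n,
      ((Module.finrank k (LinearMap.range
          ((LinearMap.mulLeft k (e i)).comp (LinearMap.mulRight k (e j)))) : ℕ) : k)
        = ε (e i * H (e j)) := by
    intro i j
    rw [← key (e i) (e j)]
    exact (trace_proj (e i) (e j) (hidem i) (hidem j)).symm
  have hmat : (Matrix.of fun i j : Fin n =>
      ((Module.finrank k (LinearMap.range
          ((LinearMap.mulLeft k (e i)).comp (LinearMap.mulRight k (e j)))) : ℕ) : k)).mulVecLin
        = evE ∘ₗ (T ∘ₗ α) := by
    apply LinearMap.ext
    intro c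
    funext i
    have hLHS : ((Matrix.of fun i j : Fin n =>
        ((Module.finrank k (LinearMap.range
            ((LinearMap.mulLeft k (e i)).comp (LinearMap.mulRight k (e j)))) : ℕ) : k)).mulVecLin c) i
          = ∑ j, ε (e i * H (e j)) * c j := by
      simp only [Matrix.mulVecLin_apply, Matrix.mulVec, dotProduct, Matrix.of_apply, hM]
    rw [hLHS]
    have hRHS : (evE ∘ₗ (T ∘ₗ α)) c i = ε (e i * H (α c)) := rfl
    rw [hRHS, hα, map_sum, Finset.mul_sum, map_sum]
    refine Finset.sum_congr rfl fun j _ => ?_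
    rw [map_smul, mul_smul_comm, map_smul, smul_eq_mul, mul_comm]
  -- now the rank computation
  have hrank : (Matrix.of fun i j : Fin n =>
      ((Module.finrank k (LinearMap.range
          ((LinearMap.mulLeft k (e i)).comp (LinearMap.mulRight k (e j)))) : ℕ) : k)).rank
        = Module.finrank k (LinearMap.range (evE ∘ₗ (T ∘ₗ α))) := by
    rw [Matrix.rank, hmat]
  rw [hrank]
  -- range (T ∘ α) = range T
  have hrange1 : LinearMap.range (T ∘ₗ α) = LinearMap.range T := by
    apply le_antisymm
    · rintro x ⟨c, rfl⟩
      exact ⟨α c, rfl⟩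
    · rintro x ⟨b, rfl⟩
      refine ⟨fun i => lam i b, ?_⟩
      show T (α fun i => lam i b) = T b
      have : H (α fun i => lam i b) = H b := by
        rw [hα, map_sum, Hdecomp b]
        exact Finset.sum_congr rfl fun i _ => by rw [map_smul]
      show Φ (H (α fun i => lam i b)) = Φ (H b)
      rw [this]
  -- injectivity of evE on range T
  have hinj : ∀ b : A, (∀ i, T b (e i) = 0) → T b = 0 := by
    intro b h0
    apply LinearMap.ext
    intro a
    rw [LinearMap.zero_apply, hT]
    conv_lhs => rw [peirce a]
    rw [Finset.sum_mul, map_sum]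
    refine Finset.sum_eq_zero fun i _ => ?_
    rw [Finset.sum_mul, map_sum]
    refine Finset.sum_eq_zero fun j _ => ?_
    by_cases hij : i = j
    · subst hij
      have hsplit : e i * a * e i = lam i a • e i + (e i * a * e i - lam i a • e i) := by abel
      rw [hsplit, add_mul, map_add, smul_mul_assoc, map_smul, smul_eq_mul]
      have h1 : ε (e i * H b) = 0 := h0 i
      rw [h1, mul_zero, hnil0 _ b (Or.inl (hlam i a)), add_zero]
    · rw [hnil0 _ b (Or.inl (offdiag_nil i j a hij))]
  -- assemble
  have h2 : LinearMap.range (evE ∘ₗ (T ∘ₗ α)) = Submodule.map evE (LinearMap.range T) := by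
    rw [LinearMap.range_comp, hrange1]
  rw [h2]
  set W : Submodule k (Module.Dual k A) := LinearMap.range T with hWdef
  set φ : W →ₗ[k] (Fin n → k) := evE ∘ₗ W.subtype with hφdef
  have hφrange : LinearMap.range φ = Submodule.map evE W := by
    rw [hφdef, LinearMap.range_comp, Submodule.range_subtype]
  have hker : LinearMap.ker φ = ⊥ := by
    refine LinearMap.ker_eq_bot'.mpr fun w hw => ?_
    obtain ⟨b, hb⟩ := w.2
    have hw' : ∀ i : Fin n, (w : Module.Dual k A) (e i) = 0 := fun i => congrFun hw i
    have hTb : T b = 0 := by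
      refine hinj b fun i => ?_
      rw [hb]
      exact hw' i
    apply Subtype.ext
    rw [← hb, hTb]
    rfl
  have h3 : Module.finrank k (LinearMap.range φ) = Module.finrank k W := by
    have h5 := LinearMap.finrank_range_add_finrank_ker (K := k) (V := ↥W) (V₂ := Fin n → k) φ
    rw [hker, finrank_bot k (↥W), add_zero] at h5
    exact h5
  have h4 : Module.finrank k W = Module.finrank k (LinearMap.range H) := by
    have hW2 : W = Submodule.map Φ (LinearMap.range H) := by
      rw [hWdef, hTdef, LinearMap.range_comp]
    rw [hW2]
    exact (Submodule.equivMapOfInjective Φ hΦinj (LinearMap.range H)).finrank_eq.symm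
  rw [← hφrange, h3, h4]
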